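/- Parseval-type identity for the QRT: Σ_{l,k∈[0,2N)} |QR_f(l,k)|² = Σ_{i,j∈[0,N)} |f(i,j)|². Equivalently, Σ_{l,k∈[0,N)} (|QR_f(2l,2k+1)+QR_f(2l+1,2k+1)|² + |QR_f(2l,2k+1)−QR_f(2l+1,2k+1)|²) = 2·Σ_{i,j∈[0,N)} |f(i,j)|². -/

import Mathlib

open Finset

/-- The symmetrized extension `f̃` on `[0,2N)²`:
`f̃(x',y') = (1/2)(−1)^(⌊x'/N⌋+⌊y'/N⌋) f(x' mod N, y' mod N)`. -/
noncomputable def ftilde (N : ℕ) (f : ZMod N × ZMod N → ℝ) (x y : ℕ) : ℝ :=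
  (1 / 2) * (-1 : ℝ) ^ (x / N + y / N) * f (x, y)

/-- The quantum Radon transform
`QR_f(l,k) = (1/√(2N))·Σ_{(x',y') ∈ [0,2N)², x'+k·y' ≡ l mod 2N} f̃(x',y')`. -/
noncomputable def QRT (N : ℕ) (f : ZMod N × ZMod N → ℝ) (l k : ℕ) : ℝ :=
  (1 / Real.sqrt (2 * N)) * ∑ x ∈ Finset.range (2 * N), ∑ y ∈ Finset.range (2 * N),
    if (x + k * y) % (2 * N) = l % (2 * N) then ftilde N f x y else 0

namespace QRTaux

lemma sum_range_even_odd (m : ℕ) (F : ℕ → ℝ) :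
    ∑ i ∈ range (2*m), F i = ∑ i ∈ range m, (F (2*i) + F (2*i+1)) := by
  induction m with
  | zero => simp
  | succ m ih =>
    have h2 : 2*(m+1) = (2*m + 1) + 1 := by ring
    rw [h2, Finset.sum_range_succ, Finset.sum_range_succ, ih, Finset.sum_range_succ]
    ring

lemma sum_range_add' (F : ℕ → ℝ) (m k : ℕ) :
    ∑ i ∈ range (m+k), F i = ∑ i ∈ range m, F i + ∑ i ∈ range k, F (m+i) := by
  induction k with
  | zero => simp
  | succ k ih => rw [← Nat.add_assoc, Finset.sum_range_succ, ih, Finset.sum_range_succ]; ring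

lemma sum_zmod (M : ℕ) [NeZero M] (F : ZMod M → ℝ) :
    ∑ i ∈ range M, F (i : ZMod M) = ∑ x : ZMod M, F x :=
  Finset.sum_nbij' (fun i => (i : ZMod M)) (fun x => x.val)
    (fun _ _ => Finset.mem_univ _) (fun x _ => Finset.mem_range.2 x.val_lt)
    (fun i hi => ZMod.val_natCast_of_lt (Finset.mem_range.1 hi))
    (fun x _ => ZMod.natCast_rightInverse x) (fun _ _ => rfl)

variable (N : ℕ) (f : ZMod N × ZMod N → ℝ)

lemma natCast_mod (a : ℕ) : ((a % (2*N) : ℕ) : ZMod N) = (a : ZMod N) := by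
  conv_rhs => rw [← Nat.div_add_mod a (2*N)]
  push_cast
  simp

lemma key_div (hN0 : N ≠ 0) (v : ℕ) (hv : v < 2*N) :
    ((v + N) % (2*N)) / N = 1 ∧ v / N = 0 ∨ ((v + N) % (2*N)) / N = 0 ∧ v / N = 1 := by
  rcases Nat.lt_or_ge v N with h|h
  · left
    have e1 : (v+N) % (2*N) = v+N := Nat.mod_eq_of_lt (by omega)
    rw [e1]
    exact ⟨Nat.div_eq_of_lt_le (by omega) (by omega), Nat.div_eq_of_lt h⟩
  · right
    have e1 : (v+N) % (2*N) = v - N := by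
      rw [Nat.mod_eq_sub_mod (by omega)]
      have h2 : v + N - 2*N = v - N := by omega
      rw [h2]; exact Nat.mod_eq_of_lt (by omega)
    rw [e1]
    exact ⟨Nat.div_eq_of_lt (by omega), Nat.div_eq_of_lt_le (by omega) (by omega)⟩

lemma ftilde_shift (hN0 : N ≠ 0) (v w : ℕ) (hv : v < 2*N) :
    ftilde N f ((v + N) % (2*N)) w = - ftilde N f v w := by
  unfold ftilde
  have harg : (((v + N) % (2*N) : ℕ) : ZMod N) = (v : ZMod N) := by
    rw [natCast_mod]; push_cast; simp
  rw [harg]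
  rcases key_div N hN0 v hv with ⟨h1, h2⟩ | ⟨h1, h2⟩ <;> rw [h1, h2] <;>
    rw [pow_add, pow_add] <;> ring

lemma ftilde_shift_y (hN0 : N ≠ 0) (v w : ℕ) (hw : w < 2*N) :
    ftilde N f v ((w + N) % (2*N)) = - ftilde N f v w := by
  unfold ftilde
  have harg : (((w + N) % (2*N) : ℕ) : ZMod N) = (w : ZMod N) := by
    rw [natCast_mod]; push_cast; simp
  rw [harg]
  rcases key_div N hN0 w hw with ⟨h1, h2⟩ | ⟨h1, h2⟩ <;> rw [h1, h2] <;>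
    rw [pow_add, pow_add] <;> ring

noncomputable def g (x y : ZMod (2*N)) : ℝ := ftilde N f x.val y.val

variable [NeZero N]

instance : NeZero (2*N) := ⟨by have := NeZero.ne N; omega⟩

lemma g_shift_x (x y : ZMod (2*N)) : g N f (x + (N : ZMod (2*N))) y = - g N f x y := by
  have hNM : ((N : ℕ) : ZMod (2*N)).val = N :=
    ZMod.val_natCast_of_lt (by have := NeZero.ne N; omega)
  have hv : (x + (N : ZMod (2*N))).val = (x.val + N) % (2*N) := by rw [ZMod.val_add, hNM]
  rw [g, g, hv, ftilde_shift N f (NeZero.ne N) _ _ x.val_lt]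

lemma g_shift_y (x y : ZMod (2*N)) : g N f x (y + (N : ZMod (2*N))) = - g N f x y := by
  have hNM : ((N : ℕ) : ZMod (2*N)).val = N :=
    ZMod.val_natCast_of_lt (by have := NeZero.ne N; omega)
  have hv : (y + (N : ZMod (2*N))).val = (y.val + N) % (2*N) := by rw [ZMod.val_add, hNM]
  rw [g, g, hv, ftilde_shift_y N f (NeZero.ne N) _ _ y.val_lt]

lemma two_c : (2 : ZMod (2*N)) * (N : ZMod (2*N)) = 0 := by
  have h : ((2*N : ℕ) : ZMod (2*N)) = 0 := ZMod.natCast_self _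
  push_cast at h
  exact h

lemma c_ne_zero : (N : ZMod (2*N)) ≠ 0 := by
  intro h
  have hv : ((N:ℕ) : ZMod (2*N)).val = N :=
    ZMod.val_natCast_of_lt (by have := NeZero.ne N; omega)
  rw [h, ZMod.val_zero] at hv
  exact NeZero.ne N hv.symm

noncomputable def SZ (l k : ZMod (2*N)) : ℝ :=
  ∑ x : ZMod (2*N), ∑ y : ZMod (2*N), if x + k*y = l then g N f x y else 0

lemma SZ_even (l k : ZMod (2*N)) : SZ N f l (2*k) = 0 := by
  have hk : ∀ y : ZMod (2*N), 2*k*(y + (N : ZMod (2*N))) = 2*k*y := by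
    intro y
    have e : 2*k*(N : ZMod (2*N)) = k * ((2:ZMod (2*N))*(N:ZMod (2*N))) := by ring
    rw [mul_add, e, two_c, mul_zero, add_zero]
  have key : SZ N f l (2*k) = - SZ N f l (2*k) := by
    nth_rewrite 1 [SZ]
    rw [SZ, ← Finset.sum_neg_distrib]
    apply Finset.sum_congr rfl
    intro x _
    rw [← Finset.sum_neg_distrib]
    apply Fintype.sum_equiv (Equiv.addRight (N : ZMod (2*N)))
    intro y
    simp only [Equiv.coe_addRight]
    simp only [hk y, g_shift_y]
    split_ifs <;> ring
  linarith

lemma Tk (k : ZMod (2*N)) :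
    ∑ l : ZMod (2*N), (SZ N f l k)^2 =
      ∑ x : ZMod (2*N), ∑ y : ZMod (2*N), ∑ d : ZMod (2*N),
        g N f x y * g N f (x - k*d) (y + d) := by
  have hA : ∀ z : ZMod (2*N), SZ N f z k = ∑ y' : ZMod (2*N), g N f (z - k*y') y' := by
    intro z
    rw [SZ, Finset.sum_comm]
    apply Finset.sum_congr rfl
    intro y' _
    have hcond : ∀ x' : ZMod (2*N), (x' + k*y' = z) ↔ (x' = z - k*y') := by
      intro x'; rw [eq_sub_iff_add_eq]
    simp_rw [hcond]
    rw [Finset.sum_ite_eq' univ (z - k*y') (fun x' => g N f x' y')]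
    simp
  have step1 : ∑ l : ZMod (2*N), (SZ N f l k)^2
      = ∑ x : ZMod (2*N), ∑ y : ZMod (2*N), g N f x y * SZ N f (x + k*y) k := by
    simp_rw [sq]
    have expand : ∀ l : ZMod (2*N), SZ N f l k * SZ N f l k =
        ∑ x : ZMod (2*N), ∑ y : ZMod (2*N),
          (if x + k*y = l then g N f x y * SZ N f l k else 0) := by
      intro l
      rw [SZ, Finset.sum_mul]
      exact Finset.sum_congr rfl fun x _ => by
        rw [Finset.sum_mul]
        exact Finset.sum_congr rfl fun y _ => by rw [ite_mul, zero_mul]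
    rw [Finset.sum_congr rfl (fun l _ => expand l), Finset.sum_comm]
    apply Finset.sum_congr rfl
    intro x _
    rw [Finset.sum_comm]
    apply Finset.sum_congr rfl
    intro y _
    rw [Finset.sum_ite_eq univ (x + k*y) (fun l => g N f x y * SZ N f l k)]
    simp
  rw [step1]
  apply Finset.sum_congr rfl
  intro x _
  apply Finset.sum_congr rfl
  intro y _
  rw [hA, Finset.mul_sum]
  refine Fintype.sum_equiv (Equiv.subRight y) _ _ (fun y' => ?_)
  simp only [Equiv.subRight_apply]
  have h1 : x - k*(y' - y) = x + k*y - k*y' := by ring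
  have h2 : y + (y' - y) = y' := by ring
  rw [h1, h2]

lemma exists_shift (n : ℕ) (hN : N = 2^n) (d : ZMod (2*N)) (hd0 : d ≠ 0)
    (hdN : d ≠ (N : ZMod (2*N))) :
    ∃ s' : ℕ, ((2*s' : ℕ) : ZMod (2*N)) * d = (N : ZMod (2*N)) := by
  have hd : ((d.val : ℕ) : ZMod (2*N)) = d := ZMod.natCast_rightInverse d
  have hlt : d.val < 2*N := d.val_lt
  have h0 : d.val ≠ 0 := fun h => hd0 (by rw [← hd, h]; simp)
  have hN0 : d.val ≠ N := fun h => hdN (by rw [← hd, h])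
  obtain ⟨a, u, hu, hdu⟩ := Nat.exists_eq_pow_mul_and_not_dvd h0 2 (by norm_num)
  obtain ⟨m, hm⟩ : ∃ m, u = 2*m+1 := ⟨u/2, by omega⟩
  have ha : a + 1 ≤ n := by
    by_contra hcon
    push_neg at hcon
    rcases Nat.lt_or_ge a (n+1) with h | h
    · have han : a = n := by omega
      subst han
      have hlt2 : 2^a * u < 2^a * 2 := by
        calc 2^a * u = d.val := hdu.symm
        _ < 2*N := hlt
        _ = 2^a * 2 := by rw [hN]; ring
      have hu2 : u < 2 := Nat.lt_of_mul_lt_mul_left hlt2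
      have hu1 : u = 1 := by omega
      exact hN0 (by rw [hdu, hu1, mul_one, hN])
    · have h1 : 2^(n+1) ≤ 2^a := Nat.pow_le_pow_right (by norm_num) h
      have h2 : 2^a ≤ 2^a * u := Nat.le_mul_of_pos_right _ (by omega)
      have h3 : 2*N = 2^(n+1) := by rw [hN]; ring
      omega
  refine ⟨2^(n-1-a), ?_⟩
  have key : (2 * 2^(n-1-a)) * d.val = N + m * (2*N) := by
    rw [hdu, hm, hN]
    have e : 2 * 2^(n-1-a) * (2^a * (2*m+1)) = 2^n * (2*m+1) := by
      rw [show (2:ℕ) * 2^(n-1-a) * (2^a * (2*m+1)) = (2^(1 + (n-1-a) + a)) * (2*m+1) from by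
        rw [pow_add, pow_add, pow_one]; ring,
        show 1 + (n-1-a) + a = n from by omega]
    rw [e]; ring
  calc ((2*2^(n-1-a) : ℕ) : ZMod (2*N)) * d
      = (((2*2^(n-1-a)) * d.val : ℕ) : ZMod (2*N)) := by conv_rhs => rw [Nat.cast_mul, hd]
    _ = ((N + m*(2*N) : ℕ) : ZMod (2*N)) := by rw [key]
    _ = (N : ZMod (2*N)) := by
        rw [Nat.cast_add, Nat.cast_mul, ZMod.natCast_self, mul_zero, add_zero]

lemma cast_odd_eq (j j' : ℕ) (h : j % N = j' % N) :
    ((2*j+1 : ℕ) : ZMod (2*N)) = ((2*j'+1 : ℕ) : ZMod (2*N)) := by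
  rw [ZMod.natCast_eq_natCast_iff]
  have hj : Nat.ModEq N j j' := h
  exact (hj.mul_left' (c := 2)).add_right 1

lemma inner_sum (n : ℕ) (hN : N = 2^n) (x w d : ZMod (2*N)) :
    ∑ k₀ ∈ range N, g N f (x - ((2*k₀+1 : ℕ) : ZMod (2*N))*d) w =
      if d = 0 then (N:ℝ) * g N f x w
      else if d = (N : ZMod (2*N)) then (N:ℝ) * g N f (x - (N:ZMod (2*N))) w else 0 := by
  have hz : ∀ z : ZMod (2*N), g N f (z - (N:ZMod (2*N))) w = - g N f z w := by
    intro z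
    have h := g_shift_x N f (z - (N:ZMod (2*N))) w
    rw [sub_add_cancel] at h
    linarith
  split_ifs with h0 hc
  · subst h0
    simp [Finset.sum_const, Finset.card_range, nsmul_eq_mul]
  · subst hc
    have hterm : ∀ k₀ : ℕ, ((2*k₀+1 : ℕ) : ZMod (2*N)) * (N:ZMod (2*N)) = (N:ZMod (2*N)) := by
      intro k₀
      push_cast
      have e : ((2:ZMod (2*N))*k₀+1)*(N:ZMod (2*N))
          = (k₀:ZMod (2*N))*((2:ZMod (2*N))*(N:ZMod (2*N))) + (N:ZMod (2*N)) := by ring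
      rw [e, two_c, mul_zero, zero_add]
    simp only [hterm]
    simp [Finset.sum_const, Finset.card_range, nsmul_eq_mul]
  · obtain ⟨s', hs⟩ := exists_shift N n hN d h0 hc
    set FZ : ZMod N → ℝ := fun t => g N f (x - ((2*t.val+1 : ℕ) : ZMod (2*N))*d) w with hFZ
    have htrans : ∑ k₀ ∈ range N, g N f (x - ((2*k₀+1 : ℕ) : ZMod (2*N))*d) w
        = ∑ t : ZMod N, FZ t := by
      rw [← sum_zmod N FZ]
      exact Finset.sum_congr rfl fun i hi => by
        simp only [hFZ, ZMod.val_natCast_of_lt (mem_range.1 hi)]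
    rw [htrans]
    have hflip : ∀ t : ZMod N, FZ (t + (s' : ZMod N)) = - FZ t := by
      intro t
      have h1 : ((t.val + s' : ℕ) : ZMod N) = t + (s' : ZMod N) := by
        rw [Nat.cast_add, ZMod.natCast_rightInverse t]
      have hval : (t + (s' : ZMod N)).val = (t.val + s') % N := by
        rw [← h1, ZMod.val_natCast]
      have hcast : ((2*(t + (s':ZMod N)).val + 1 : ℕ) : ZMod (2*N)) =
          ((2*(t.val + s') + 1 : ℕ) : ZMod (2*N)) := by
        apply cast_odd_eq
        rw [hval]
        exact Nat.mod_mod_of_dvd _ dvd_rfl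
      have hsplit : ((2*(t.val + s') + 1 : ℕ) : ZMod (2*N)) =
          ((2*t.val+1 : ℕ) : ZMod (2*N)) + ((2*s' : ℕ) : ZMod (2*N)) := by push_cast; ring
      show g N f (x - ((2*(t + (s':ZMod N)).val+1 : ℕ) : ZMod (2*N))*d) w = - FZ t
      rw [hcast, hsplit, add_mul, hs]
      have harr : x - (((2*t.val+1 : ℕ) : ZMod (2*N))*d + (N:ZMod (2*N)))
          = (x - ((2*t.val+1 : ℕ) : ZMod (2*N))*d) - (N:ZMod (2*N)) := by ring
      rw [harr, hz]
    have hshift : ∑ t : ZMod N, FZ t = ∑ t : ZMod N, FZ (t + (s' : ZMod N)) :=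
      (Fintype.sum_equiv (Equiv.addRight (s' : ZMod N)) (fun t => FZ (t + (s' : ZMod N))) FZ
        (fun _ => rfl)).symm
    have hzero : ∑ t : ZMod N, FZ t = - ∑ t : ZMod N, FZ t := by
      calc ∑ t : ZMod N, FZ t = ∑ t : ZMod N, FZ (t + (s' : ZMod N)) := hshift
      _ = ∑ t : ZMod N, - FZ t := Finset.sum_congr rfl fun t _ => hflip t
      _ = - ∑ t : ZMod N, FZ t := by rw [Finset.sum_neg_distrib]
    linarith

lemma odd_total (n : ℕ) (hN : N = 2^n) :
    ∑ k₀ ∈ range N, ∑ l : ZMod (2*N), (SZ N f l ((2*k₀+1 : ℕ) : ZMod (2*N)))^2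
      = (2*(N:ℝ)) * ∑ x : ZMod (2*N), ∑ y : ZMod (2*N), (g N f x y)^2 := by
  have main : ∀ x y : ZMod (2*N),
      ∑ k₀ ∈ range N, ∑ d : ZMod (2*N),
        g N f x y * g N f (x - ((2*k₀+1:ℕ) : ZMod (2*N))*d) (y+d)
        = 2*(N:ℝ) * (g N f x y)^2 := by
    intro x y
    rw [Finset.sum_comm]
    have hinner : ∀ d : ZMod (2*N),
        ∑ k₀ ∈ range N, g N f x y * g N f (x - ((2*k₀+1:ℕ):ZMod (2*N))*d) (y+d)
        = g N f x y * (if d = 0 then (N:ℝ) * g N f x (y+d)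
            else if d = (N:ZMod (2*N)) then (N:ℝ) * g N f (x - (N:ZMod (2*N))) (y+d) else 0) := by
      intro d
      rw [← Finset.mul_sum, inner_sum N f n hN x (y+d) d]
    rw [Finset.sum_congr rfl fun d _ => hinner d]
    have hvanish : ∀ d ∈ (univ : Finset (ZMod (2*N))),
        d ∉ ({0, (N:ZMod (2*N))} : Finset (ZMod (2*N))) →
        g N f x y * (if d = 0 then (N:ℝ) * g N f x (y+d)
            else if d = (N:ZMod (2*N)) then (N:ℝ) * g N f (x - (N:ZMod (2*N))) (y+d) else 0)
          = 0 := by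
      intro d _ hd
      simp only [Finset.mem_insert, Finset.mem_singleton] at hd
      push_neg at hd
      rw [if_neg hd.1, if_neg hd.2, mul_zero]
    rw [← Finset.sum_subset (Finset.subset_univ ({0, (N:ZMod (2*N))} : Finset (ZMod (2*N)))) hvanish]
    rw [Finset.sum_pair (show (0 : ZMod (2*N)) ≠ (N:ZMod (2*N)) from fun h => c_ne_zero N h.symm)]
    rw [if_pos rfl, if_neg (c_ne_zero N), if_pos rfl]
    have e1 : g N f (x - (N:ZMod (2*N))) (y + (N:ZMod (2*N))) = g N f x y := by
      have h1 := g_shift_x N f (x - (N:ZMod (2*N))) (y + (N:ZMod (2*N)))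
      rw [sub_add_cancel] at h1
      have h2 := g_shift_y N f x y
      linarith
    rw [e1, add_zero]
    ring
  calc ∑ k₀ ∈ range N, ∑ l : ZMod (2*N), (SZ N f l ((2*k₀+1 : ℕ) : ZMod (2*N)))^2
      = ∑ k₀ ∈ range N, ∑ x : ZMod (2*N), ∑ y : ZMod (2*N), ∑ d : ZMod (2*N),
          g N f x y * g N f (x - ((2*k₀+1:ℕ):ZMod (2*N))*d) (y+d) :=
        Finset.sum_congr rfl fun k₀ _ => Tk N f _
    _ = ∑ x : ZMod (2*N), ∑ k₀ ∈ range N, ∑ y : ZMod (2*N), ∑ d : ZMod (2*N),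
          g N f x y * g N f (x - ((2*k₀+1:ℕ):ZMod (2*N))*d) (y+d) := Finset.sum_comm
    _ = ∑ x : ZMod (2*N), ∑ y : ZMod (2*N), ∑ k₀ ∈ range N, ∑ d : ZMod (2*N),
          g N f x y * g N f (x - ((2*k₀+1:ℕ):ZMod (2*N))*d) (y+d) :=
        Finset.sum_congr rfl fun x _ => Finset.sum_comm
    _ = ∑ x : ZMod (2*N), ∑ y : ZMod (2*N), 2*(N:ℝ)*(g N f x y)^2 :=
        Finset.sum_congr rfl fun x _ => Finset.sum_congr rfl fun y _ => main x y
    _ = (2*(N:ℝ)) * ∑ x : ZMod (2*N), ∑ y : ZMod (2*N), (g N f x y)^2 := by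
        rw [Finset.mul_sum]
        exact Finset.sum_congr rfl fun x _ => by rw [Finset.mul_sum]

lemma fold (ψ : ZMod N → ℝ) :
    ∑ i ∈ range (2*N), ψ (i : ZMod N) = 2 * ∑ i ∈ range N, ψ (i : ZMod N) := by
  rw [two_mul, sum_range_add' (fun i => ψ (i : ZMod N)) N N]
  have hcast : ∀ i : ℕ, ((N + i : ℕ) : ZMod N) = (i : ZMod N) := fun i => by
    push_cast; simp
  have h2 : ∑ i ∈ range N, ψ ((N + i : ℕ) : ZMod N) = ∑ i ∈ range N, ψ (i : ZMod N) :=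
    Finset.sum_congr rfl fun i _ => by rw [hcast i]
  rw [h2]; ring

lemma gsq : ∑ x : ZMod (2*N), ∑ y : ZMod (2*N), (g N f x y)^2
    = ∑ i ∈ range N, ∑ j ∈ range N, (f (i, j))^2 := by
  have hterm : ∀ i ∈ range (2*N), ∀ j ∈ range (2*N),
      (g N f (i : ZMod (2*N)) (j : ZMod (2*N)))^2
        = (1/4) * (f ((i : ZMod N), (j : ZMod N)))^2 := by
    intro i hi j hj
    rw [g, ZMod.val_natCast_of_lt (mem_range.1 hi), ZMod.val_natCast_of_lt (mem_range.1 hj),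
      ftilde, mul_pow, mul_pow, ← pow_mul, mul_comm (i/N + j/N) 2, pow_mul, neg_one_sq, one_pow]
    norm_num
  calc ∑ x : ZMod (2*N), ∑ y : ZMod (2*N), (g N f x y)^2
      = ∑ i ∈ range (2*N), ∑ j ∈ range (2*N), (g N f (i : ZMod (2*N)) (j : ZMod (2*N)))^2 := by
        rw [← sum_zmod (2*N) (fun x => ∑ y : ZMod (2*N), (g N f x y)^2)]
        exact Finset.sum_congr rfl fun i _ =>
          (sum_zmod (2*N) (fun y => (g N f (i : ZMod (2*N)) y)^2)).symm
    _ = ∑ i ∈ range (2*N), ∑ j ∈ range (2*N), (1/4) * (f ((i : ZMod N), (j : ZMod N)))^2 :=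
        Finset.sum_congr rfl fun i hi => Finset.sum_congr rfl fun j hj => hterm i hi j hj
    _ = 2 * ∑ i ∈ range N, ∑ j ∈ range (2*N), (1/4) * (f ((i : ZMod N), (j : ZMod N)))^2 :=
        fold N (fun a => ∑ j ∈ range (2*N), (1/4) * (f (a, (j : ZMod N)))^2)
    _ = 2 * ∑ i ∈ range N, 2 * ∑ j ∈ range N, (1/4) * (f ((i : ZMod N), (j : ZMod N)))^2 := by
        refine congrArg _ (Finset.sum_congr rfl fun i _ => ?_)
        exact fold N (fun b => (1/4) * (f ((i : ZMod N), b))^2)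
    _ = ∑ i ∈ range N, ∑ j ∈ range N, (f ((i : ZMod N), (j : ZMod N)))^2 := by
        rw [Finset.mul_sum]
        refine Finset.sum_congr rfl fun i _ => ?_
        rw [Finset.mul_sum, Finset.mul_sum]
        exact Finset.sum_congr rfl fun j _ => by ring

lemma QR_eq (l k : ℕ) :
    QRT N f l k = (1 / Real.sqrt (2*N)) * SZ N f (l : ZMod (2*N)) (k : ZMod (2*N)) := by
  rw [QRT, SZ]
  congr 1
  rw [← sum_zmod (2*N) (fun a => ∑ b : ZMod (2*N),
    if a + (k : ZMod (2*N))*b = (l : ZMod (2*N)) then g N f a b else 0)]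
  refine Finset.sum_congr rfl fun x hx => ?_
  rw [← sum_zmod (2*N) (fun b =>
    if (x : ZMod (2*N)) + (k : ZMod (2*N))*b = (l : ZMod (2*N))
      then g N f (x : ZMod (2*N)) b else 0)]
  refine Finset.sum_congr rfl fun y hy => ?_
  have hcond : ((x + k*y) % (2*N) = l % (2*N)) ↔
      ((x : ZMod (2*N)) + (k : ZMod (2*N))*(y : ZMod (2*N)) = (l : ZMod (2*N))) := by
    rw [← ZMod.natCast_eq_natCast_iff']
    constructor
    · intro h; rw [← h]; push_cast; ring
    · intro h; rw [show ((x + k*y : ℕ) : ZMod (2*N)) =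
        (x : ZMod (2*N)) + (k : ZMod (2*N))*(y : ZMod (2*N)) from by push_cast; ring]
      exact h
  have hval : ftilde N f x y = g N f (x : ZMod (2*N)) (y : ZMod (2*N)) := by
    rw [g, ZMod.val_natCast_of_lt (mem_range.1 hx), ZMod.val_natCast_of_lt (mem_range.1 hy)]
  exact if_congr hcond hval rfl

lemma QR_sq (l k : ℕ) :
    (QRT N f l k)^2 = (1 / ((2*N : ℕ) : ℝ)) * (SZ N f (l : ZMod (2*N)) (k : ZMod (2*N)))^2 := by
  rw [QR_eq, mul_pow, div_pow, one_pow, Real.sq_sqrt (by positivity)]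
  norm_num

lemma QR_even (l k₀ : ℕ) : QRT N f l (2*k₀) = 0 := by
  rw [QR_eq]
  have h : ((2*k₀ : ℕ) : ZMod (2*N)) = 2 * (k₀ : ZMod (2*N)) := by push_cast; ring
  rw [h, SZ_even, mul_zero]

lemma odd_part (n : ℕ) (hN : N = 2^n) :
    ∑ k₀ ∈ range N, ∑ l ∈ range (2*N), (QRT N f l (2*k₀+1))^2
      = ∑ i ∈ range N, ∑ j ∈ range N, (f (i, j))^2 := by
  have hNpos : 0 < N := Nat.pos_of_ne_zero (NeZero.ne N)
  have h2N : ((2*N : ℕ) : ℝ) ≠ 0 := by positivity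
  calc ∑ k₀ ∈ range N, ∑ l ∈ range (2*N), (QRT N f l (2*k₀+1))^2
      = ∑ k₀ ∈ range N, (1 / ((2*N : ℕ) : ℝ)) *
          ∑ l : ZMod (2*N), (SZ N f l ((2*k₀+1 : ℕ) : ZMod (2*N)))^2 := by
        refine Finset.sum_congr rfl fun k₀ _ => ?_
        rw [← sum_zmod (2*N) (fun l => (SZ N f l ((2*k₀+1 : ℕ) : ZMod (2*N)))^2), Finset.mul_sum]
        exact Finset.sum_congr rfl fun l _ => QR_sq N f l (2*k₀+1)
    _ = (1 / ((2*N : ℕ) : ℝ)) *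
          ∑ k₀ ∈ range N, ∑ l : ZMod (2*N), (SZ N f l ((2*k₀+1 : ℕ) : ZMod (2*N)))^2 := by
        rw [Finset.mul_sum]
    _ = (1 / ((2*N : ℕ) : ℝ)) * ((2*(N:ℝ)) *
          ∑ x : ZMod (2*N), ∑ y : ZMod (2*N), (g N f x y)^2) := by rw [odd_total N f n hN]
    _ = ∑ x : ZMod (2*N), ∑ y : ZMod (2*N), (g N f x y)^2 := by
        push_cast
        push_cast at h2N
        field_simp
    _ = ∑ i ∈ range N, ∑ j ∈ range N, (f (i, j))^2 := gsq N f

end QRTaux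

open QRTaux

/-- Parseval-type identity for the QRT (with `N = 2^n` a power of two):
`Σ_{l,k∈[0,2N)} |QR_f(l,k)|² = Σ_{i,j∈[0,N)} |f(i,j)|²`; equivalently
`Σ_{l,k∈[0,N)} (|QR_f(2l,2k+1)+QR_f(2l+1,2k+1)|² + |QR_f(2l,2k+1)−QR_f(2l+1,2k+1)|²)
 = 2·Σ_{i,j∈[0,N)} |f(i,j)|²`. -/
theorem qrt_parseval (n : ℕ) (N : ℕ) (hN : N = 2 ^ n) (f : ZMod N × ZMod N → ℝ) :
    (∑ l ∈ Finset.range (2 * N), ∑ k ∈ Finset.range (2 * N), (QRT N f l k) ^ 2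
      = ∑ i ∈ Finset.range N, ∑ j ∈ Finset.range N, (f (i, j)) ^ 2) ∧
    (∑ l ∈ Finset.range N, ∑ k ∈ Finset.range N,
        ((QRT N f (2 * l) (2 * k + 1) + QRT N f (2 * l + 1) (2 * k + 1)) ^ 2
          + (QRT N f (2 * l) (2 * k + 1) - QRT N f (2 * l + 1) (2 * k + 1)) ^ 2)
      = 2 * ∑ i ∈ Finset.range N, ∑ j ∈ Finset.range N, (f (i, j)) ^ 2) := by
  haveI : NeZero N := ⟨by rw [hN]; positivity⟩
  constructor
  · rw [Finset.sum_comm, sum_range_even_odd N (fun k => ∑ l ∈ range (2*N), (QRT N f l k)^2)]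
    have heach : ∀ k₀ : ℕ,
        (∑ l ∈ range (2*N), (QRT N f l (2*k₀))^2) + (∑ l ∈ range (2*N), (QRT N f l (2*k₀+1))^2)
          = ∑ l ∈ range (2*N), (QRT N f l (2*k₀+1))^2 := by
      intro k₀
      have hz : ∑ l ∈ range (2*N), (QRT N f l (2*k₀))^2 = 0 := by
        refine Finset.sum_eq_zero fun l _ => ?_
        rw [QR_even]
        norm_num
      rw [hz, zero_add]
    rw [Finset.sum_congr rfl (fun k₀ _ => heach k₀)]
    exact odd_part N f n hN
  · have hpar : ∀ a b : ℝ, (a+b)^2 + (a-b)^2 = 2*(a^2+b^2) := fun a b => by ring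
    calc ∑ l ∈ range N, ∑ k ∈ range N, ((QRT N f (2*l) (2*k+1) + QRT N f (2*l+1) (2*k+1))^2
          + (QRT N f (2*l) (2*k+1) - QRT N f (2*l+1) (2*k+1))^2)
        = ∑ l ∈ range N, ∑ k ∈ range N,
            2*((QRT N f (2*l) (2*k+1))^2 + (QRT N f (2*l+1) (2*k+1))^2) :=
          Finset.sum_congr rfl fun l _ => Finset.sum_congr rfl fun k _ => hpar _ _
      _ = 2 * ∑ k ∈ range N, ∑ l ∈ range N,
            ((QRT N f (2*l) (2*k+1))^2 + (QRT N f (2*l+1) (2*k+1))^2) := by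
          rw [Finset.sum_comm]
          simp_rw [← Finset.mul_sum]
      _ = 2 * ∑ k ∈ range N, ∑ l ∈ range (2*N), (QRT N f l (2*k+1))^2 :=
          congrArg _ (Finset.sum_congr rfl fun k _ =>
            (sum_range_even_odd N (fun l => (QRT N f l (2*k+1))^2)).symm)
      _ = 2 * ∑ i ∈ range N, ∑ j ∈ range N, (f (i, j))^2 := by rw [odd_part N f n hN]
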